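/- Let A : ℝ³ × ℝ³ → M₃(ℝ) be the Pauli channel parametrization A(λ₁,λ₂,λ₃,φz,φy,φx) = R·diag(λ₁,λ₂,λ₃)·R⁻¹ with R = Rz(φz)Ry(φy)Rx(φx). Then A is differentiable at the point (λ₁,λ₂,λ₃,0,0,0) and its (Fréchet) derivative there sends the tangent vector (u₁,u₂,u₃,w_z,w_y,w_x) ∈ ℝ⁶ to the symmetric matrix D with diagonal entries D₁₁ = u₁, D₂₂ = u₂, D₃₃ = u₃ and off-diagonal entries D₁₂ = D₂₁ = (λ₁−λ₂)·w_z, D₁₃ = D₃₁ = (λ₁−λ₃)·w_y, D₂₃ = D₃₂ = (λ₂−λ₃)·w_x. (Equivalently, in the bases (dλ₁,dλ₂,dλ₃,dφz,dφy,dφx) and (da₁₁,da₂₂,da₃₃,da₁₂,s, da₁₃,s, da₂₃,s), the derivative is Diag(1,1,1, λ₁−λ₂, λ₁−λ₃, λ₂−λ₃).) -/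

import Mathlib

open Matrix Real

attribute [local instance] Matrix.normedAddCommGroup Matrix.normedSpace

/-- Rotation about the z-axis. -/
noncomputable def Rz (φ : ℝ) : Matrix (Fin 3) (Fin 3) ℝ :=
  !![cos φ, -sin φ, 0; sin φ, cos φ, 0; 0, 0, 1]

/-- Rotation about the y-axis. -/
noncomputable def Ry (φ : ℝ) : Matrix (Fin 3) (Fin 3) ℝ :=
  !![cos φ, 0, -sin φ; 0, 1, 0; sin φ, 0, cos φ]

/-- Rotation about the x-axis. -/
noncomputable def Rx (φ : ℝ) : Matrix (Fin 3) (Fin 3) ℝ :=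
  !![1, 0, 0; 0, cos φ, -sin φ; 0, sin φ, cos φ]

/-- The Pauli channel parametrization, as a function of the six real parameters
`(λ₁, λ₂, λ₃, φz, φy, φx)`:
`A(λ₁,λ₂,λ₃,φz,φy,φx) = R ⬝ diag(λ₁,λ₂,λ₃) ⬝ R⁻¹` with `R = Rz φz * Ry φy * Rx φx`. -/
noncomputable def pauliA : ℝ × ℝ × ℝ × ℝ × ℝ × ℝ → Matrix (Fin 3) (Fin 3) ℝ :=
  fun p =>
    (Rz p.2.2.2.1 * Ry p.2.2.2.2.1 * Rx p.2.2.2.2.2)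
      * Matrix.diagonal ![p.1, p.2.1, p.2.2.1]
      * (Rz p.2.2.2.1 * Ry p.2.2.2.2.1 * Rx p.2.2.2.2.2)⁻¹

/- ### auxiliary -/
abbrev M3 := Matrix (Fin 3) (Fin 3) ℝ
abbrev P6 := ℝ × ℝ × ℝ × ℝ × ℝ × ℝ

lemma Rz_mul_transpose (φ : ℝ) : Rz φ * (Rz φ)ᵀ = 1 := by
  ext i j
  fin_cases i <;> fin_cases j <;>
    simp [Rz, Matrix.mul_apply, Fin.sum_univ_succ, Matrix.one_apply,
      Matrix.transpose_apply, Matrix.vecHead, Matrix.vecTail] <;>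
    nlinarith [sin_sq_add_cos_sq φ]

lemma Ry_mul_transpose (φ : ℝ) : Ry φ * (Ry φ)ᵀ = 1 := by
  ext i j
  fin_cases i <;> fin_cases j <;>
    simp [Ry, Matrix.mul_apply, Fin.sum_univ_succ, Matrix.one_apply,
      Matrix.transpose_apply, Matrix.vecHead, Matrix.vecTail] <;>
    nlinarith [sin_sq_add_cos_sq φ]

lemma Rx_mul_transpose (φ : ℝ) : Rx φ * (Rx φ)ᵀ = 1 := by
  ext i j
  fin_cases i <;> fin_cases j <;>
    simp [Rx, Matrix.mul_apply, Fin.sum_univ_succ, Matrix.one_apply,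
      Matrix.transpose_apply, Matrix.vecHead, Matrix.vecTail] <;>
    nlinarith [sin_sq_add_cos_sq φ]

lemma R_mul_transpose (a b c : ℝ) :
    (Rz a * Ry b * Rx c) * (Rz a * Ry b * Rx c)ᵀ = 1 := by
  rw [Matrix.transpose_mul, Matrix.transpose_mul]
  simp only [Matrix.mul_assoc]
  rw [← Matrix.mul_assoc (Rx c) (Rx c)ᵀ, Rx_mul_transpose, Matrix.one_mul,
    ← Matrix.mul_assoc (Ry b) (Ry b)ᵀ, Ry_mul_transpose, Matrix.one_mul, Rz_mul_transpose]

lemma pauliA_eq : pauliA = fun p : P6 =>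
    (Rz p.2.2.2.1 * Ry p.2.2.2.2.1 * Rx p.2.2.2.2.2)
      * Matrix.diagonal ![p.1, p.2.1, p.2.2.1]
      * (Rz p.2.2.2.1 * Ry p.2.2.2.2.1 * Rx p.2.2.2.2.2)ᵀ := by
  funext p
  rw [pauliA, Matrix.inv_eq_right_inv (R_mul_transpose _ _ _)]

lemma Rz_zero : Rz 0 = 1 := by
  ext i j; fin_cases i <;> fin_cases j <;>
    simp [Rz, Matrix.one_apply, Matrix.vecHead, Matrix.vecTail]

lemma Ry_zero : Ry 0 = 1 := by
  ext i j; fin_cases i <;> fin_cases j <;>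
    simp [Ry, Matrix.one_apply, Matrix.vecHead, Matrix.vecTail]

lemma Rx_zero : Rx 0 = 1 := by
  ext i j; fin_cases i <;> fin_cases j <;>
    simp [Rx, Matrix.one_apply, Matrix.vecHead, Matrix.vecTail]

lemma hasDerivAt_Rz : HasDerivAt Rz (!![0,-1,0;1,0,0;0,0,0] : M3) 0 := by
  have h : Rz = fun φ => cos φ • (!![(1:ℝ),0,0;0,1,0;0,0,0] : M3)
      + sin φ • (!![0,-1,0;1,0,0;0,0,0] : M3) + (!![0,0,0;0,0,0;0,0,1] : M3) := by
    funext φ; ext i j; fin_cases i <;> fin_cases j <;>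
      simp [Rz, Matrix.vecHead, Matrix.vecTail]
  rw [h]
  have := (((Real.hasDerivAt_cos 0).smul_const (!![(1:ℝ),0,0;0,1,0;0,0,0] : M3)).add
    ((Real.hasDerivAt_sin 0).smul_const (!![0,-1,0;1,0,0;0,0,0] : M3))).add_const
      (!![0,0,0;0,0,0;0,0,1] : M3)
  simp at this ⊢; exact this

lemma hasDerivAt_Ry : HasDerivAt Ry (!![0,0,-1;0,0,0;1,0,0] : M3) 0 := by
  have h : Ry = fun φ => cos φ • (!![(1:ℝ),0,0;0,0,0;0,0,1] : M3)
      + sin φ • (!![0,0,-1;0,0,0;1,0,0] : M3) + (!![0,0,0;0,1,0;0,0,0] : M3) := by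
    funext φ; ext i j; fin_cases i <;> fin_cases j <;>
      simp [Ry, Matrix.vecHead, Matrix.vecTail]
  rw [h]
  have := (((Real.hasDerivAt_cos 0).smul_const (!![(1:ℝ),0,0;0,0,0;0,0,1] : M3)).add
    ((Real.hasDerivAt_sin 0).smul_const (!![0,0,-1;0,0,0;1,0,0] : M3))).add_const
      (!![0,0,0;0,1,0;0,0,0] : M3)
  simp at this ⊢; exact this

lemma hasDerivAt_Rx : HasDerivAt Rx (!![0,0,0;0,0,-1;0,1,0] : M3) 0 := by
  have h : Rx = fun φ => cos φ • (!![(0:ℝ),0,0;0,1,0;0,0,1] : M3)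
      + sin φ • (!![0,0,0;0,0,-1;0,1,0] : M3) + (!![1,0,0;0,0,0;0,0,0] : M3) := by
    funext φ; ext i j; fin_cases i <;> fin_cases j <;>
      simp [Rx, Matrix.vecHead, Matrix.vecTail]
  rw [h]
  have := (((Real.hasDerivAt_cos 0).smul_const (!![(0:ℝ),0,0;0,1,0;0,0,1] : M3)).add
    ((Real.hasDerivAt_sin 0).smul_const (!![0,0,0;0,0,-1;0,1,0] : M3))).add_const
      (!![1,0,0;0,0,0;0,0,0] : M3)
  simp at this ⊢; exact this

noncomputable def mulB : M3 →L[ℝ] M3 →L[ℝ] M3 :=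
  LinearMap.toContinuousLinearMap <|
  { toFun := fun A => LinearMap.toContinuousLinearMap
      { toFun := fun B => A * B
        map_add' := fun _ _ => Matrix.mul_add _ _ _
        map_smul' := fun _ _ => Matrix.mul_smul _ _ _ }
    map_add' := by intro A B; ext C i j; simp [Matrix.add_mul]
    map_smul' := by intro c A; ext C i j; simp [Matrix.smul_mul] }

@[simp] lemma mulB_apply (A B : M3) : mulB A B = A * B := rfl

lemma hasFDerivAt_matmul {f g : P6 → M3} {f' g' : P6 →L[ℝ] M3} {x : P6}
    (hf : HasFDerivAt f f' x) (hg : HasFDerivAt g g' x) :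
    HasFDerivAt (fun p => f p * g p)
      ((mulB.isBoundedBilinearMap.deriv (f x, g x)).comp (f'.prod g')) x :=
  by have := (mulB.isBoundedBilinearMap.hasFDerivAt (f x, g x)).comp x (hf.prodMk hg); exact this

noncomputable def proj4 : P6 →L[ℝ] ℝ :=
  LinearMap.toContinuousLinearMap
    { toFun := fun p => p.2.2.2.1, map_add' := fun _ _ => rfl, map_smul' := fun _ _ => rfl }

noncomputable def proj5 : P6 →L[ℝ] ℝ :=
  LinearMap.toContinuousLinearMap
    { toFun := fun p => p.2.2.2.2.1, map_add' := fun _ _ => rfl, map_smul' := fun _ _ => rfl }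

noncomputable def proj6 : P6 →L[ℝ] ℝ :=
  LinearMap.toContinuousLinearMap
    { toFun := fun p => p.2.2.2.2.2, map_add' := fun _ _ => rfl, map_smul' := fun _ _ => rfl }

@[simp] lemma proj4_apply (p : P6) : proj4 p = p.2.2.2.1 := rfl
@[simp] lemma proj5_apply (p : P6) : proj5 p = p.2.2.2.2.1 := rfl
@[simp] lemma proj6_apply (p : P6) : proj6 p = p.2.2.2.2.2 := rfl

noncomputable def diagL : P6 →L[ℝ] M3 :=
  LinearMap.toContinuousLinearMap
    { toFun := fun p => Matrix.diagonal ![p.1, p.2.1, p.2.2.1]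
      map_add' := by
        intro p q; ext i j
        fin_cases i <;> fin_cases j <;>
          simp [Matrix.diagonal, Matrix.vecHead, Matrix.vecTail]
      map_smul' := by
        intro c p; ext i j
        fin_cases i <;> fin_cases j <;>
          simp [Matrix.diagonal, Matrix.vecHead, Matrix.vecTail] }

@[simp] lemma diagL_apply (p : P6) : diagL p = Matrix.diagonal ![p.1, p.2.1, p.2.2.1] := rfl

noncomputable def transL : M3 →L[ℝ] M3 :=
  LinearMap.toContinuousLinearMap
    { toFun := fun A => Aᵀ
      map_add' := fun _ _ => Matrix.transpose_add _ _
      map_smul' := fun _ _ => Matrix.transpose_smul _ _ }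

@[simp] lemma transL_apply (A : M3) : transL A = Aᵀ := rfl

set_option maxHeartbeats 1000000 in
/-- Lemma 4: the parametrization `A` is differentiable at
`(λ₁,λ₂,λ₃,0,0,0)` and its Fréchet derivative sends `(u₁,u₂,u₃,w_z,w_y,w_x)` to the
symmetric matrix with diagonal `(u₁,u₂,u₃)` and off-diagonal entries
`(λ₁-λ₂)w_z`, `(λ₁-λ₃)w_y`, `(λ₂-λ₃)w_x`. -/
theorem pauliA_hasFDerivAt (l₁ l₂ l₃ : ℝ) :
    ∃ L : ℝ × ℝ × ℝ × ℝ × ℝ × ℝ →L[ℝ] Matrix (Fin 3) (Fin 3) ℝ,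
      HasFDerivAt pauliA L (l₁, l₂, l₃, 0, 0, 0) ∧
      ∀ u₁ u₂ u₃ wz wy wx : ℝ,
        L (u₁, u₂, u₃, wz, wy, wx)
          = !![u₁, (l₁ - l₂) * wz, (l₁ - l₃) * wy;
               (l₁ - l₂) * wz, u₂, (l₂ - l₃) * wx;
               (l₁ - l₃) * wy, (l₂ - l₃) * wx, u₃] := by
  set x₀ : P6 := (l₁, l₂, l₃, 0, 0, 0) with hx₀
  have hRz6 : HasFDerivAt (fun p : P6 => Rz p.2.2.2.1)
      ((((1 : ℝ →L[ℝ] ℝ).smulRight (!![0,-1,0;1,0,0;0,0,0] : M3)).comp proj4)) x₀ :=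
    by have := HasFDerivAt.comp x₀ hasDerivAt_Rz.hasFDerivAt proj4.hasFDerivAt; exact this
  have hRy6 : HasFDerivAt (fun p : P6 => Ry p.2.2.2.2.1)
      ((((1 : ℝ →L[ℝ] ℝ).smulRight (!![0,0,-1;0,0,0;1,0,0] : M3)).comp proj5)) x₀ :=
    by have := HasFDerivAt.comp x₀ hasDerivAt_Ry.hasFDerivAt proj5.hasFDerivAt; exact this
  have hRx6 : HasFDerivAt (fun p : P6 => Rx p.2.2.2.2.2)
      ((((1 : ℝ →L[ℝ] ℝ).smulRight (!![0,0,0;0,0,-1;0,1,0] : M3)).comp proj6)) x₀ :=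
    by have := HasFDerivAt.comp x₀ hasDerivAt_Rx.hasFDerivAt proj6.hasFDerivAt; exact this
  have hRR := hasFDerivAt_matmul hRz6 hRy6
  have hRRR := hasFDerivAt_matmul hRR hRx6
  have hT := HasFDerivAt.comp x₀ transL.hasFDerivAt hRRR
  have hD : HasFDerivAt (fun p : P6 => Matrix.diagonal ![p.1, p.2.1, p.2.2.1]) diagL x₀ :=
    diagL.hasFDerivAt
  have h1 := hasFDerivAt_matmul hRRR hD
  have h2 := hasFDerivAt_matmul h1 hT
  rw [pauliA_eq]
  refine ⟨_, h2, ?_⟩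
  intro u₁ u₂ u₃ wz wy wx
  repeat' first
    | erw [ContinuousLinearMap.comp_apply]
    | erw [ContinuousLinearMap.prod_apply]
  simp only [ContinuousLinearMap.comp_apply, ContinuousLinearMap.prod_apply,
    IsBoundedBilinearMap.deriv_apply, ContinuousLinearMap.smulRight_apply,
    ContinuousLinearMap.one_apply, proj4_apply, proj5_apply, proj6_apply,
    diagL_apply, transL_apply, Function.comp, mulB_apply, hx₀]
  repeat' erw [mulB_apply]
  erw [transL_apply, diagL_apply]
  simp only [Rz_zero, Ry_zero, Rx_zero, Matrix.one_mul, Matrix.mul_one,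
    Matrix.transpose_one, Matrix.transpose_add, Matrix.transpose_smul]
  ext i j
  fin_cases i <;> fin_cases j <;>
    simp [Matrix.mul_apply, Matrix.diagonal, Fin.sum_univ_succ, Matrix.vecHead,
      Matrix.vecTail, Matrix.add_apply, Matrix.smul_apply, Matrix.transpose_apply] <;>
    ring
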